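/- All three quadrisecants of a hexagonal trefoil knot are alternating. -/

import Mathlib

noncomputable section

/-- Points of ℝ³. -/
abbrev E3 : Type := Fin 3 → ℝ

/-- A line in ℝ³: the affine span of two distinct points, viewed as a set. -/
def IsLine (L : Set E3) : Prop :=
  ∃ p q : E3, p ≠ q ∧ L = (affineSpan ℝ ({p, q} : Set E3) : Set E3)

/-- A plane: an affine subspace of dimension 2. -/
def IsPlane (P : AffineSubspace ℝ E3) : Prop :=
  Module.finrank ℝ P.direction = 2

/-- A (combinatorial) hexagon: six vertices in ℝ³, joined cyclically.
Paper vertex `v_i` corresponds to `v (i-1)`, paper edge `e_{i,i+1}` to `edge (i-1)`,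
paper disk `Δ_i` to `disk (i-1)`, paper plane `P_i` to `P (i-1)`. -/
structure Hexagon where
  v : Fin 6 → E3

namespace Hexagon

variable (H : Hexagon)

/-- The closed edge from `v i` to `v (i+1)`. -/
def edge (i : Fin 6) : Set E3 := segment ℝ (H.v i) (H.v (i + 1))

/-- The open edge (interior of the edge) from `v i` to `v (i+1)`. -/
def intEdge (i : Fin 6) : Set E3 := openSegment ℝ (H.v i) (H.v (i + 1))

/-- The hexagonal closed polygonal curve: union of the six edges. -/
def K : Set E3 := ⋃ i, H.edge i

/-- The triangular disk with vertices `v (i-1)`, `v i`, `v (i+1)`. -/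
def disk (i : Fin 6) : Set E3 := convexHull ℝ ({H.v (i - 1), H.v i, H.v (i + 1)} : Set E3)

/-- The plane through `v (i-1)`, `v i`, `v (i+1)`. -/
def P (i : Fin 6) : AffineSubspace ℝ E3 :=
  affineSpan ℝ ({H.v (i - 1), H.v i, H.v (i + 1)} : Set E3)

/-- General position: no three vertices collinear, no four vertices coplanar. -/
def GeneralPosition : Prop :=
  (∀ i j k : Fin 6, i ≠ j → i ≠ k → j ≠ k →
    ¬ Collinear ℝ ({H.v i, H.v j, H.v k} : Set E3)) ∧
  (∀ i j k l : Fin 6, i ≠ j → i ≠ k → i ≠ l → j ≠ k → j ≠ l → k ≠ l →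
    ¬ Coplanar ℝ ({H.v i, H.v j, H.v k, H.v l} : Set E3))

/-- The Huh–Jeon intersection pattern: the only nonempty intersections of open edges with
interiors of triangular disks are `int e23 ∩ int Δ5`, `int e23 ∩ int Δ6`, `int e45 ∩ int Δ1`,
`int e45 ∩ int Δ2`, `int e61 ∩ int Δ3`, `int e61 ∩ int Δ4` (in the paper's labels). -/
def HuhJeon : Prop :=
  ∀ i j : Fin 6, (H.intEdge i ∩ intrinsicInterior ℝ (H.disk j)).Nonempty ↔
    (i, j) ∈ ({(1, 4), (1, 5), (3, 0), (3, 1), (5, 2), (5, 3)} : Set (Fin 6 × Fin 6))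

/-- The candidate quadrisecant line `L_{k+1}` of the paper: the intersection of the planes
`P (k+1)` and `P (k+4)` (for `k = 0, 1, 2`).  `QLine 0` is the paper's `L₁ = P₂ ∩ P₅`,
`QLine 1` is `L₂ = P₃ ∩ P₆`, and `QLine 2` is `L₃ = P₄ ∩ P₁`. -/
def QLine (k : Fin 6) : Set E3 := (H.P (k + 1) : Set E3) ∩ (H.P (k + 4) : Set E3)

end Hexagon

/-- `L` is a quadrisecant of the curve `K`: a line meeting `K` in at least four points. -/
def IsQuadrisecantOf (K L : Set E3) : Prop :=
  IsLine L ∧ ∃ S : Finset E3, S.card = 4 ∧ (S : Set E3) ⊆ K ∩ L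

/-- A quadrisecant of the hexagonal knot `H`. -/
def Hexagon.IsQuadrisecant (H : Hexagon) (L : Set E3) : Prop :=
  IsQuadrisecantOf H.K L

/-- A standard parametrization of the trefoil knot. -/
def trefoilCurve (t : ℝ) : E3 :=
  ![Real.sin t + 2 * Real.sin (2 * t), Real.cos t - 2 * Real.cos (2 * t), - Real.sin (3 * t)]

/-- The standard trefoil knot as a subset of ℝ³. -/
def TrefoilSet : Set E3 := Set.range trefoilCurve

/-- The standard planar round circle (the unknot). -/
def UnknotSet : Set E3 := {x : E3 | x 0 ^ 2 + x 1 ^ 2 = 1 ∧ x 2 = 0}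

/-- Two subsets of ℝ³ are equivalent as knots if there is an ambient isotopy of ℝ³
carrying one onto the other. -/
def KnotEquiv (K₁ K₂ : Set E3) : Prop :=
  ∃ F : ℝ → (E3 ≃ₜ E3), Continuous (fun p : ℝ × E3 => F p.1 p.2) ∧
    F 0 = Homeomorph.refl E3 ∧ (F 1) '' K₁ = K₂

/-- `K` has the knot type of the trefoil. -/
def IsTrefoil (K : Set E3) : Prop := KnotEquiv K TrefoilSet

/-- `K` is an unknot: it has the knot type of a planar circle. -/
def IsUnknot (K : Set E3) : Prop := KnotEquiv K UnknotSet

/-- The closed polygonal curve with vertices `v 0, …, v (n-1)` joined cyclically. -/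
def polyCurve (n : ℕ) [NeZero n] (v : Fin n → E3) : Set E3 :=
  ⋃ i, segment ℝ (v i) (v (i + 1))

/-- `v` determines an embedded (simple) closed polygonal curve: distinct vertices,
adjacent edges meet exactly at their common vertex, non-adjacent edges are disjoint. -/
def IsSimplePolygon (n : ℕ) [NeZero n] (v : Fin n → E3) : Prop :=
  3 ≤ n ∧ Function.Injective v ∧
  (∀ i : Fin n,
    segment ℝ (v i) (v (i + 1)) ∩ segment ℝ (v (i + 1)) (v (i + 2)) = {v (i + 1)}) ∧
  (∀ i j : Fin n, j ≠ i → j ≠ i + 1 → j + 1 ≠ i →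
    segment ℝ (v i) (v (i + 1)) ∩ segment ℝ (v j) (v (j + 1)) = ∅)

namespace Hexagon

/-- The quadrisecant approximation determined by marked points `c i`, `d i` on edge `i`:
`O i = [c i, d i]` (straightened part of edge `i`) and `N i = [d (i-1), c i]`
(the segment cutting the corner at `v i`). -/
def QA (H : Hexagon) (c d : Fin 6 → E3) : Set E3 :=
  (⋃ i, segment ℝ (c i) (d i)) ∪ (⋃ i, segment ℝ (d (i - 1)) (c i))

/-- `c i`, `d i` are exactly the quadrisecant points on edge `i`, occurring in the
order `v i, c i, d i, v (i+1)` along the edge. -/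
def QAData (H : Hexagon) (c d : Fin 6 → E3) : Prop :=
  ∀ i : Fin 6,
    ({c i, d i} : Set E3) = H.edge i ∩ (H.QLine 0 ∪ H.QLine 1 ∪ H.QLine 2) ∧
    Sbtw ℝ (H.v i) (c i) (d i) ∧ Sbtw ℝ (c i) (d i) (H.v (i + 1))

end Hexagon

lemma collinear_line {p q : E3} : Collinear ℝ (affineSpan ℝ ({p,q} : Set E3) : Set E3) := by
  have h := collinear_pair ℝ p q
  unfold Collinear at *
  rwa [← AffineSubspace.direction_eq_vectorSpan, direction_affineSpan]

lemma mem_intrinsicInterior_iff_ball {s : Set E3} {x : E3} :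
    x ∈ intrinsicInterior ℝ s ↔
      ∃ _ : x ∈ affineSpan ℝ s, ∃ ε > 0, ∀ w ∈ affineSpan ℝ s, dist w x < ε → w ∈ s := by
  constructor
  · rintro ⟨⟨x, hxspan⟩, hxint, rfl⟩
    refine ⟨hxspan, ?_⟩
    rw [mem_interior_iff_mem_nhds, nhds_subtype_eq_comap, Filter.mem_comap] at hxint
    obtain ⟨u, hu, hsub⟩ := hxint
    obtain ⟨ε, hε, hball⟩ := Metric.mem_nhds_iff.1 hu
    exact ⟨ε, hε, fun w hw hdist =>
      hsub (Set.mem_preimage.2 (hball (by simpa [Metric.mem_ball] using hdist)) :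
        (⟨w, hw⟩ : affineSpan ℝ s) ∈ _)⟩
  · rintro ⟨hxspan, ε, hε, hball⟩
    refine ⟨⟨x, hxspan⟩, ?_, rfl⟩
    rw [mem_interior_iff_mem_nhds, nhds_subtype_eq_comap, Filter.mem_comap]
    exact ⟨Metric.ball x ε, Metric.ball_mem_nhds x hε,
      fun w hw => hball w.1 w.2 (by simpa [Metric.mem_ball] using hw)⟩

lemma openSegment_subset_intrinsicInterior {s : Set E3} (hs : Convex ℝ s) {x y : E3}
    (hx : x ∈ s) (hy : y ∈ intrinsicInterior ℝ s) :
    openSegment ℝ x y ⊆ intrinsicInterior ℝ s := by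
  obtain ⟨hyspan, ε, hε, hball⟩ := mem_intrinsicInterior_iff_ball.1 hy
  rintro z ⟨c, d, hc, hd, hcd, rfl⟩
  have hxspan : x ∈ affineSpan ℝ s := subset_affineSpan ℝ s hx
  have hzspan : c • x + d • y ∈ affineSpan ℝ s := by
    have : c • x + d • y = d • (y - x) + x := by
      have : c = 1 - d := by linarith
      subst this; module
    rw [this]
    exact AffineSubspace.vadd_mem_of_mem_direction
      (Submodule.smul_mem _ d (AffineSubspace.vsub_mem_direction hyspan hxspan)) hxspan
  have hd0 : d ≠ 0 := ne_of_gt hd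
  refine mem_intrinsicInterior_iff_ball.2 ⟨hzspan, d * ε, by positivity, ?_⟩
  intro w hw hdist
  set z := c • x + d • y with hz
  set y' := d⁻¹ • (w - z) + y with hy'
  have hy'span : y' ∈ affineSpan ℝ s :=
    AffineSubspace.vadd_mem_of_mem_direction
      (Submodule.smul_mem _ _ (AffineSubspace.vsub_mem_direction hw hzspan)) hyspan
  have hy's : y' ∈ s := by
    apply hball y' hy'span
    have h1 : y' - y = d⁻¹ • (w - z) := by rw [hy']; abel
    calc dist y' y = ‖y' - y‖ := dist_eq_norm _ _
    _ = |d|⁻¹ * ‖w - z‖ := by rw [h1, norm_smul, Real.norm_eq_abs, abs_inv]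
    _ = d⁻¹ * dist w z := by rw [abs_of_pos hd, dist_eq_norm]
    _ < d⁻¹ * (d * ε) := by apply mul_lt_mul_of_pos_left hdist (by positivity)
    _ = ε := by field_simp
  have hwz : w = c • x + d • y' := by
    rw [hy', smul_add, smul_smul, mul_inv_cancel₀ hd0, one_smul]
    rw [hz]; abel
  rw [hwz]
  exact hs hx hy's hc.le hd.le hcd

lemma segment_subset_line {u w : E3} :
    segment ℝ u w ⊆ (affineSpan ℝ ({u, w} : Set E3) : Set E3) :=
  (AffineSubspace.convex _).segment_subset (left_mem_affineSpan_pair ℝ u w)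
    (right_mem_affineSpan_pair ℝ u w)

lemma seg_unique {S : AffineSubspace ℝ E3} {u v x y : E3} (hu : u ∉ S)
    (hx : x ∈ segment ℝ u v) (hy : y ∈ segment ℝ u v) (hxS : x ∈ S) (hyS : y ∈ S) : x = y := by
  by_contra hne
  have hcol : Collinear ℝ ({x, y, u, v} : Set E3) :=
    collinear_insert_insert_of_mem_affineSpan_pair (segment_subset_line hx) (segment_subset_line hy)
  have humem : u ∈ line[ℝ, x, y] :=
    hcol.mem_affineSpan_of_mem_of_ne (by simp) (by simp) (by simp) hne
  exact hu ((affineSpan_le.2 (Set.insert_subset_iff.2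
    ⟨hxS, Set.singleton_subset_iff.2 hyS⟩)) humem)

lemma coplanar_of_mem_span {w x y z : E3} (h : w ∈ affineSpan ℝ ({x, y, z} : Set E3)) :
    Coplanar ℝ ({w, x, y, z} : Set E3) :=
  (coplanar_insert_iff_of_mem_affineSpan h).2 (coplanar_triple ℝ x y z)

lemma eq_mid_of_mem_adj {u v w x : E3} (h1 : x ∈ segment ℝ u v) (h2 : x ∈ segment ℝ v w)
    (hncol : ¬ Collinear ℝ ({u, v, w} : Set E3)) : x = v := by
  by_contra hne
  have hc1 : Collinear ℝ ({x, u, v} : Set E3) :=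
    collinear_insert_of_mem_affineSpan_pair (segment_subset_line h1)
  have hc2 : Collinear ℝ ({x, v, w} : Set E3) :=
    collinear_insert_of_mem_affineSpan_pair (segment_subset_line h2)
  have hu : u ∈ line[ℝ, x, v] :=
    hc1.mem_affineSpan_of_mem_of_ne (by simp) (by simp) (by simp) hne
  have hw : w ∈ line[ℝ, x, v] :=
    hc2.mem_affineSpan_of_mem_of_ne (by simp) (by simp) (by simp) hne
  have hc : Collinear ℝ ({u, w, x, v} : Set E3) :=
    collinear_insert_insert_of_mem_affineSpan_pair hu hw
  exact hncol (hc.subset (by intro z hz; simp at hz ⊢; tauto))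

lemma helperA {L : Set E3} (hcolL : Collinear ℝ L) {x t o u w : E3}
    (hxL : x ∈ L) (htL : t ∈ L) (hoL : o ∈ L)
    (hx : x ∈ line[ℝ, u, w]) (ht : t ∈ line[ℝ, u, w])
    (hnc : ¬ Collinear ℝ ({o, u, w} : Set E3)) : x = t := by
  by_contra hxne
  have ho : o ∈ line[ℝ, x, t] := hcolL.mem_affineSpan_of_mem_of_ne hxL htL hoL hxne
  have hle : line[ℝ, x, t] ≤ affineSpan ℝ ({u, w} : Set E3) :=
    affineSpan_le.2 (Set.insert_subset_iff.2 ⟨hx, Set.singleton_subset_iff.2 ht⟩)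
  exact hnc (collinear_insert_of_mem_affineSpan_pair (hle ho))

lemma helperB {L : Set E3} (hcolL : Collinear ℝ L) {x t o u w : E3}
    (hxL : x ∈ L) (htL : t ∈ L) (hoL : o ∈ L)
    (hx : x ∈ line[ℝ, u, w])
    (hncop : ¬ Coplanar ℝ ({o, u, w, t} : Set E3)) : x = t := by
  by_contra hxne
  have ho : o ∈ line[ℝ, x, t] := hcolL.mem_affineSpan_of_mem_of_ne hxL htL hoL hxne
  have hle : line[ℝ, x, t] ≤ affineSpan ℝ ({u, w, t} : Set E3) := by
    apply affineSpan_le.2 (Set.insert_subset_iff.2 ⟨?_, Set.singleton_subset_iff.2 ?_⟩)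
    · exact affineSpan_mono ℝ (by intro z hz; simp at hz ⊢; tauto) hx
    · exact mem_affineSpan ℝ (by simp)
  exact hncop (coplanar_of_mem_span (hle ho))

lemma fin_ne (i : Fin 6) {a b : Fin 6} (h : a ≠ b) : i + a ≠ i + b :=
  fun hh => h (add_left_cancel hh)

lemma fin_ne0 (i : Fin 6) {b : Fin 6} (h : (0 : Fin 6) ≠ b) : i ≠ i + b :=
  fun hh => h (add_left_cancel (show i + 0 = i + b by rw [add_zero]; exact hh))

lemma fin_ne0' (i : Fin 6) {b : Fin 6} (h : b ≠ (0 : Fin 6)) : i + b ≠ i :=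
  fun hh => h (add_left_cancel (show i + b = i + 0 by rw [add_zero]; exact hh))

lemma IsLine.collinear {L : Set E3} (h : IsLine L) : Collinear ℝ L := by
  obtain ⟨p, q, -, rfl⟩ := h
  exact collinear_line

lemma IsLine.subset_affineSubspace {L : Set E3} (hL : IsLine L) {S : AffineSubspace ℝ E3}
    {x y : E3} (hx : x ∈ L) (hy : y ∈ L) (hne : x ≠ y) (hxS : x ∈ S) (hyS : y ∈ S) :
    L ⊆ (S : Set E3) := by
  intro z hz
  have hz' : z ∈ line[ℝ, x, y] := hL.collinear.mem_affineSpan_of_mem_of_ne hx hy hz hne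
  exact (affineSpan_le.2 (Set.insert_subset_iff.2 ⟨hxS, Set.singleton_subset_iff.2 hyS⟩)) hz'

lemma master (H : Hexagon) (hgp : H.GeneralPosition) (i : Fin 6)
    (L : Set E3) (hL : H.IsQuadrisecant L)
    (hne1 : (H.intEdge (i+1) ∩ intrinsicInterior ℝ (H.disk (i+4))).Nonempty)
    (hne2 : (H.intEdge (i+3) ∩ intrinsicInterior ℝ (H.disk (i+1))).Nonempty)
    (he1 : ¬ (H.intEdge (i+3) ∩ intrinsicInterior ℝ (H.disk (i+4))).Nonempty)
    (he2 : ¬ (H.intEdge (i+4) ∩ intrinsicInterior ℝ (H.disk (i+4))).Nonempty)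
    (he3 : ¬ (H.intEdge i ∩ intrinsicInterior ℝ (H.disk (i+1))).Nonempty)
    (he4 : ¬ (H.intEdge (i+1) ∩ intrinsicInterior ℝ (H.disk (i+1))).Nonempty)
    (a q p b : E3) (ha : a ∈ H.edge i ∩ L) (hq : q ∈ H.edge (i + 1) ∩ L)
    (hp : p ∈ H.edge (i + 3) ∩ L) (hb : b ∈ H.edge (i + 4) ∩ L) :
    Sbtw ℝ b q p ∧ Sbtw ℝ q p a := by
  obtain ⟨hline, S, hScard, hSsub⟩ := hL
  obtain ⟨haE, haL⟩ := ha
  obtain ⟨hqE, hqL⟩ := hq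
  obtain ⟨hpE, hpL⟩ := hp
  obtain ⟨hbE, hbL⟩ := hb
  have n_a : i + 1 + 1 = i + 2 := by rw [add_assoc]; rfl
  have n_b : i + 3 + 1 = i + 4 := by rw [add_assoc]; rfl
  have n_c : i + 4 + 1 = i + 5 := by rw [add_assoc]; rfl
  have n_d : i + 5 + 1 = i := by rw [add_assoc]; show i + 0 = i; exact add_zero i
  have n_e : i + 1 - 1 = i := add_sub_cancel_right i 1
  have n_f : i + 4 - 1 = i + 3 := by rw [add_sub_assoc]; rfl
  have n_g : i + 2 + 1 = i + 3 := by rw [add_assoc]; rfl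
  -- edges and disks, normalized
  have EdgeI : H.edge i = segment ℝ (H.v i) (H.v (i+1)) := rfl
  have Edge1 : H.edge (i+1) = segment ℝ (H.v (i+1)) (H.v (i+2)) := by
    simp only [Hexagon.edge, n_a]
  have Edge3 : H.edge (i+3) = segment ℝ (H.v (i+3)) (H.v (i+4)) := by
    simp only [Hexagon.edge, n_b]
  have Edge4 : H.edge (i+4) = segment ℝ (H.v (i+4)) (H.v (i+5)) := by
    simp only [Hexagon.edge, n_c]
  have IEdgeI : H.intEdge i = openSegment ℝ (H.v i) (H.v (i+1)) := rfl
  have IEdge1 : H.intEdge (i+1) = openSegment ℝ (H.v (i+1)) (H.v (i+2)) := by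
    simp only [Hexagon.intEdge, n_a]
  have IEdge3 : H.intEdge (i+3) = openSegment ℝ (H.v (i+3)) (H.v (i+4)) := by
    simp only [Hexagon.intEdge, n_b]
  have IEdge4 : H.intEdge (i+4) = openSegment ℝ (H.v (i+4)) (H.v (i+5)) := by
    simp only [Hexagon.intEdge, n_c]
  have Disk4 : H.disk (i+4) = convexHull ℝ ({H.v (i+3), H.v (i+4), H.v (i+5)} : Set E3) := by
    simp only [Hexagon.disk, n_f, n_c]
  have Disk1 : H.disk (i+1) = convexHull ℝ ({H.v i, H.v (i+1), H.v (i+2)} : Set E3) := by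
    simp only [Hexagon.disk, n_e, n_a]
  -- the two planes
  set P1 : AffineSubspace ℝ E3 := affineSpan ℝ ({H.v i, H.v (i+1), H.v (i+2)} : Set E3) with hP1def
  set P4 : AffineSubspace ℝ E3 :=
    affineSpan ℝ ({H.v (i+3), H.v (i+4), H.v (i+5)} : Set E3) with hP4def
  -- vertices not in the opposite plane
  have hviP4 : H.v i ∉ P4 := fun h => hgp.2 i (i+3) (i+4) (i+5)
    (fin_ne0 i (by decide)) (fin_ne0 i (by decide)) (fin_ne0 i (by decide))
    (fin_ne i (by decide)) (fin_ne i (by decide)) (fin_ne i (by decide))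
    (coplanar_of_mem_span h)
  have hv1P4 : H.v (i+1) ∉ P4 := fun h => hgp.2 (i+1) (i+3) (i+4) (i+5)
    (fin_ne i (by decide)) (fin_ne i (by decide)) (fin_ne i (by decide))
    (fin_ne i (by decide)) (fin_ne i (by decide)) (fin_ne i (by decide))
    (coplanar_of_mem_span h)
  have hv2P4 : H.v (i+2) ∉ P4 := fun h => hgp.2 (i+2) (i+3) (i+4) (i+5)
    (fin_ne i (by decide)) (fin_ne i (by decide)) (fin_ne i (by decide))
    (fin_ne i (by decide)) (fin_ne i (by decide)) (fin_ne i (by decide))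
    (coplanar_of_mem_span h)
  have hv3P1 : H.v (i+3) ∉ P1 := fun h => hgp.2 (i+3) i (i+1) (i+2)
    (fin_ne0' i (by decide)) (fin_ne i (by decide)) (fin_ne i (by decide))
    (fin_ne0 i (by decide)) (fin_ne0 i (by decide)) (fin_ne i (by decide))
    (coplanar_of_mem_span h)
  have hv4P1 : H.v (i+4) ∉ P1 := fun h => hgp.2 (i+4) i (i+1) (i+2)
    (fin_ne0' i (by decide)) (fin_ne i (by decide)) (fin_ne i (by decide))
    (fin_ne0 i (by decide)) (fin_ne0 i (by decide)) (fin_ne i (by decide))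
    (coplanar_of_mem_span h)
  have hv5P1 : H.v (i+5) ∉ P1 := fun h => hgp.2 (i+5) i (i+1) (i+2)
    (fin_ne0' i (by decide)) (fin_ne i (by decide)) (fin_ne i (by decide))
    (fin_ne0 i (by decide)) (fin_ne0 i (by decide)) (fin_ne i (by decide))
    (coplanar_of_mem_span h)
  -- edges lie in their planes
  have hedgeIP1 : H.edge i ⊆ (P1 : Set E3) := by
    rw [EdgeI]
    exact (AffineSubspace.convex _).segment_subset
      (subset_affineSpan ℝ _ (by simp)) (subset_affineSpan ℝ _ (by simp))
  have hedge1P1 : H.edge (i+1) ⊆ (P1 : Set E3) := by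
    rw [Edge1]
    exact (AffineSubspace.convex _).segment_subset
      (subset_affineSpan ℝ _ (by simp)) (subset_affineSpan ℝ _ (by simp))
  have hedge3P4 : H.edge (i+3) ⊆ (P4 : Set E3) := by
    rw [Edge3]
    exact (AffineSubspace.convex _).segment_subset
      (subset_affineSpan ℝ _ (by simp)) (subset_affineSpan ℝ _ (by simp))
  have hedge4P4 : H.edge (i+4) ⊆ (P4 : Set E3) := by
    rw [Edge4]
    exact (AffineSubspace.convex _).segment_subset
      (subset_affineSpan ℝ _ (by simp)) (subset_affineSpan ℝ _ (by simp))
  have haP1 : a ∈ P1 := hedgeIP1 haE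
  have hqP1 : q ∈ P1 := hedge1P1 hqE
  have hpP4 : p ∈ P4 := hedge3P4 hpE
  have hbP4 : b ∈ P4 := hedge4P4 hbE
  have hcolL : Collinear ℝ L := hline.collinear
  by_cases haq : a = q
  · -- degenerate: a = q = v (i+1)
    have hav : a = H.v (i+1) := by
      apply eq_mid_of_mem_adj (EdgeI ▸ haE) (Edge1 ▸ (haq ▸ hqE))
      exact hgp.1 i (i+1) (i+2) (fin_ne0 i (by decide)) (fin_ne0 i (by decide))
        (fin_ne i (by decide))
    by_cases hpb : p = b
    · -- both degenerate: L meets K in at most two points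
      exfalso
      have hpv : p = H.v (i+4) := by
        apply eq_mid_of_mem_adj (Edge3 ▸ hpE) (Edge4 ▸ (hpb ▸ hbE))
        exact hgp.1 (i+3) (i+4) (i+5) (fin_ne i (by decide)) (fin_ne i (by decide))
          (fin_ne i (by decide))
      have hv1L : H.v (i+1) ∈ L := hav ▸ haL
      have hv4L : H.v (i+4) ∈ L := hpv ▸ hpL
      have hsub2 : (S : Set E3) ⊆ ({H.v (i+1), H.v (i+4)} : Set E3) := by
        intro x hx
        obtain ⟨hxK, hxL⟩ := hSsub hx
        rw [Hexagon.K, Set.mem_iUnion] at hxK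
        obtain ⟨j, hxj⟩ := hxK
        obtain ⟨k, rfl⟩ : ∃ k, j = i + k := ⟨j - i, by abel⟩
        rcases (by decide : ∀ k : Fin 6, k = 0 ∨ k = 1 ∨ k = 2 ∨ k = 3 ∨ k = 4 ∨ k = 5) k
          with rfl | rfl | rfl | rfl | rfl | rfl
        · rw [add_zero] at hxj
          have : x = H.v (i+1) := helperA hcolL hxL hv1L hv4L
            (segment_subset_line (EdgeI ▸ hxj)) (right_mem_affineSpan_pair ℝ _ _)
            (hgp.1 (i+4) i (i+1) (fin_ne0' i (by decide)) (fin_ne i (by decide))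
              (fin_ne0 i (by decide)))
          simp [this]
        · have : x = H.v (i+1) := helperA hcolL hxL hv1L hv4L
            (segment_subset_line (Edge1 ▸ hxj)) (left_mem_affineSpan_pair ℝ _ _)
            (hgp.1 (i+4) (i+1) (i+2) (fin_ne i (by decide)) (fin_ne i (by decide))
              (fin_ne i (by decide)))
          simp [this]
        · have hxj' : x ∈ segment ℝ (H.v (i+2)) (H.v (i+3)) := by
            rw [Hexagon.edge, n_g] at hxj; exact hxj
          have : x = H.v (i+1) := helperB hcolL hxL hv1L hv4L
            (segment_subset_line hxj')
            (hgp.2 (i+4) (i+2) (i+3) (i+1) (fin_ne i (by decide)) (fin_ne i (by decide))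
              (fin_ne i (by decide)) (fin_ne i (by decide)) (fin_ne i (by decide))
              (fin_ne i (by decide)))
          simp [this]
        · have : x = H.v (i+4) := helperA hcolL hxL hv4L hv1L
            (segment_subset_line (Edge3 ▸ hxj)) (right_mem_affineSpan_pair ℝ _ _)
            (hgp.1 (i+1) (i+3) (i+4) (fin_ne i (by decide)) (fin_ne i (by decide))
              (fin_ne i (by decide)))
          simp [this]
        · have : x = H.v (i+4) := helperA hcolL hxL hv4L hv1L
            (segment_subset_line (Edge4 ▸ hxj)) (left_mem_affineSpan_pair ℝ _ _)
            (hgp.1 (i+1) (i+4) (i+5) (fin_ne i (by decide)) (fin_ne i (by decide))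
              (fin_ne i (by decide)))
          simp [this]
        · have hxj' : x ∈ segment ℝ (H.v (i+5)) (H.v i) := by
            rw [Hexagon.edge, n_d] at hxj; exact hxj
          have : x = H.v (i+1) := helperB hcolL hxL hv1L hv4L
            (segment_subset_line hxj')
            (hgp.2 (i+4) (i+5) i (i+1) (fin_ne i (by decide)) (fin_ne0' i (by decide))
              (fin_ne i (by decide)) (fin_ne0' i (by decide)) (fin_ne i (by decide))
              (fin_ne0 i (by decide)))
          simp [this]
      have h1 : (S : Set E3).ncard ≤ ({H.v (i+1), H.v (i+4)} : Set E3).ncard :=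
        Set.ncard_le_ncard hsub2 (Set.toFinite _)
      have h2 : ({H.v (i+1), H.v (i+4)} : Set E3).ncard ≤ 2 :=
        (Set.ncard_insert_le _ _).trans (by simp)
      rw [Set.ncard_coe_finset, hScard] at h1
      omega
    · -- a = q but p ≠ b : contradiction
      exfalso
      have hLP4 : L ⊆ (P4 : Set E3) :=
        hline.subset_affineSubspace hpL hbL hpb hpP4 hbP4
      exact hv1P4 (hLP4 (hav ▸ haL))
  · by_cases hpb : p = b
    · -- p = b but a ≠ q : contradiction
      exfalso
      have hpv : p = H.v (i+4) := by
        apply eq_mid_of_mem_adj (Edge3 ▸ hpE) (Edge4 ▸ (hpb ▸ hbE))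
        exact hgp.1 (i+3) (i+4) (i+5) (fin_ne i (by decide)) (fin_ne i (by decide))
          (fin_ne i (by decide))
      have hLP1 : L ⊆ (P1 : Set E3) :=
        hline.subset_affineSubspace haL hqL haq haP1 hqP1
      exact hv4P1 (hLP1 (hpv ▸ hpL))
    · -- main case
      have hLP1 : L ⊆ (P1 : Set E3) :=
        hline.subset_affineSubspace haL hqL haq haP1 hqP1
      have hLP4 : L ⊆ (P4 : Set E3) :=
        hline.subset_affineSubspace hpL hbL hpb hpP4 hbP4
      have haP4 : a ∈ P4 := hLP4 haL
      have hqP4 : q ∈ P4 := hLP4 hqL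
      have hpP1 : p ∈ P1 := hLP1 hpL
      have hbP1 : b ∈ P1 := hLP1 hbL
      -- all four points are on open edges
      have haO : a ∈ H.intEdge i := by
        rw [IEdgeI]
        refine mem_openSegment_of_ne_left_right ?_ ?_ (EdgeI ▸ haE)
        · exact fun h => hviP4 (h ▸ haP4)
        · exact fun h => hv1P4 (h ▸ haP4)
      have hqO : q ∈ H.intEdge (i+1) := by
        rw [IEdge1]
        refine mem_openSegment_of_ne_left_right ?_ ?_ (Edge1 ▸ hqE)
        · exact fun h => hv1P4 (h ▸ hqP4)
        · exact fun h => hv2P4 (h ▸ hqP4)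
      have hpO : p ∈ H.intEdge (i+3) := by
        rw [IEdge3]
        refine mem_openSegment_of_ne_left_right ?_ ?_ (Edge3 ▸ hpE)
        · exact fun h => hv3P1 (h ▸ hpP1)
        · exact fun h => hv4P1 (h ▸ hpP1)
      have hbO : b ∈ H.intEdge (i+4) := by
        rw [IEdge4]
        refine mem_openSegment_of_ne_left_right ?_ ?_ (Edge4 ▸ hbE)
        · exact fun h => hv4P1 (h ▸ hbP1)
        · exact fun h => hv5P1 (h ▸ hbP1)
      -- q is in the relative interior of disk (i+4)
      obtain ⟨x, hxO, hxI⟩ := hne1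
      have hxD4 : x ∈ convexHull ℝ ({H.v (i+3), H.v (i+4), H.v (i+5)} : Set E3) := by
        rw [Disk4] at hxI; exact intrinsicInterior_subset hxI
      have hxq : x = q := by
        apply seg_unique (S := P4) hv1P4 ((openSegment_subset_segment ℝ _ _) (IEdge1 ▸ hxO))
          (Edge1 ▸ hqE) _ hqP4
        exact convexHull_subset_affineSpan _ hxD4
      have hqI : q ∈ intrinsicInterior ℝ
          (convexHull ℝ ({H.v (i+3), H.v (i+4), H.v (i+5)} : Set E3)) := by
        rw [← hxq, ← Disk4]; exact hxI
      -- p is in the relative interior of disk (i+1)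
      obtain ⟨y, hyO, hyI⟩ := hne2
      have hyD1 : y ∈ convexHull ℝ ({H.v i, H.v (i+1), H.v (i+2)} : Set E3) := by
        rw [Disk1] at hyI; exact intrinsicInterior_subset hyI
      have hyp : y = p := by
        apply seg_unique (S := P1) hv3P1 ((openSegment_subset_segment ℝ _ _) (IEdge3 ▸ hyO))
          (Edge3 ▸ hpE) _ hpP1
        exact convexHull_subset_affineSpan _ hyD1
      have hpI : p ∈ intrinsicInterior ℝ
          (convexHull ℝ ({H.v i, H.v (i+1), H.v (i+2)} : Set E3)) := by
        rw [← hyp, ← Disk1]; exact hyI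
      -- distinctness from interiority
      have hqb : q ≠ b := fun h => he2 ⟨b, hbO, by rw [Disk4]; exact h ▸ hqI⟩
      have hqp : q ≠ p := fun h => he1 ⟨p, hpO, by rw [Disk4]; exact h ▸ hqI⟩
      have hpa : p ≠ a := fun h => he3 ⟨a, haO, by rw [Disk1]; exact h ▸ hpI⟩
      -- memberships in the disks
      have hpD4 : p ∈ convexHull ℝ ({H.v (i+3), H.v (i+4), H.v (i+5)} : Set E3) :=
        (convex_convexHull ℝ _).segment_subset (subset_convexHull ℝ _ (by simp))
          (subset_convexHull ℝ _ (by simp)) (Edge3 ▸ hpE)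
      have hbD4 : b ∈ convexHull ℝ ({H.v (i+3), H.v (i+4), H.v (i+5)} : Set E3) :=
        (convex_convexHull ℝ _).segment_subset (subset_convexHull ℝ _ (by simp))
          (subset_convexHull ℝ _ (by simp)) (Edge4 ▸ hbE)
      have haD1 : a ∈ convexHull ℝ ({H.v i, H.v (i+1), H.v (i+2)} : Set E3) :=
        (convex_convexHull ℝ _).segment_subset (subset_convexHull ℝ _ (by simp))
          (subset_convexHull ℝ _ (by simp)) (EdgeI ▸ haE)
      have hqD1 : q ∈ convexHull ℝ ({H.v i, H.v (i+1), H.v (i+2)} : Set E3) :=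
        (convex_convexHull ℝ _).segment_subset (subset_convexHull ℝ _ (by simp))
          (subset_convexHull ℝ _ (by simp)) (Edge1 ▸ hqE)
      constructor
      · have hc1 : Collinear ℝ ({b, q, p} : Set E3) := Collinear.subset (by
          intro z hz; simp only [Set.mem_insert_iff, Set.mem_singleton_iff] at hz
          rcases hz with rfl | rfl | rfl <;> assumption) hcolL
        rcases hc1.wbtw_or_wbtw_or_wbtw with h | h | h
        · exact ⟨h, hqb, hqp⟩
        · -- h : Wbtw ℝ q p b
          exfalso
          have hpseg : p ∈ openSegment ℝ b q := by
            rw [openSegment_symm]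
            exact mem_openSegment_of_ne_left_right hqp (fun hh => hpb hh.symm) h.mem_segment
          exact he1 ⟨p, hpO, by rw [Disk4]; exact
            openSegment_subset_intrinsicInterior (convex_convexHull ℝ _) hbD4 hqI hpseg⟩
        · -- h : Wbtw ℝ p b q
          exfalso
          have hbseg : b ∈ openSegment ℝ p q :=
            mem_openSegment_of_ne_left_right hpb hqb h.mem_segment
          exact he2 ⟨b, hbO, by rw [Disk4]; exact
            openSegment_subset_intrinsicInterior (convex_convexHull ℝ _) hpD4 hqI hbseg⟩
      · have hc2 : Collinear ℝ ({q, p, a} : Set E3) := Collinear.subset (by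
          intro z hz; simp only [Set.mem_insert_iff, Set.mem_singleton_iff] at hz
          rcases hz with rfl | rfl | rfl <;> assumption) hcolL
        rcases hc2.wbtw_or_wbtw_or_wbtw with h | h | h
        · exact ⟨h, hqp.symm, hpa⟩
        · -- h : Wbtw ℝ p a q
          exfalso
          have haseg : a ∈ openSegment ℝ q p := by
            rw [openSegment_symm]
            exact mem_openSegment_of_ne_left_right hpa (fun hh => haq hh.symm) h.mem_segment
          exact he3 ⟨a, haO, by rw [Disk1]; exact
            openSegment_subset_intrinsicInterior (convex_convexHull ℝ _) hqD1 hpI haseg⟩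
        · -- h : Wbtw ℝ a q p
          exfalso
          have hqseg : q ∈ openSegment ℝ a p :=
            mem_openSegment_of_ne_left_right haq (fun hh => hqp hh.symm) h.mem_segment
          exact he4 ⟨q, hqO, by rw [Disk1]; exact
            openSegment_subset_intrinsicInterior (convex_convexHull ℝ _) haD1 hpI hqseg⟩

/-- All three quadrisecants of a hexagonal trefoil knot are alternating: for
the quadrisecant meeting edges `e12, e23, e45, e56` (and its relabelings under the cyclic
symmetry `i ↦ i+2` of the Huh–Jeon pattern) at points `a, q, p, b` respectively, the order
of the points along the line is `b, q, p, a` (up to reversal). -/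
theorem stmt10 (H : Hexagon) (hgp : H.GeneralPosition) (hhj : H.HuhJeon)
    (htre : IsTrefoil H.K) (L : Set E3) (hL : H.IsQuadrisecant L)
    (i : Fin 6) (hi : i ∈ ({0, 2, 4} : Set (Fin 6)))
    (a q p b : E3) (ha : a ∈ H.edge i ∩ L) (hq : q ∈ H.edge (i + 1) ∩ L)
    (hp : p ∈ H.edge (i + 3) ∩ L) (hb : b ∈ H.edge (i + 4) ∩ L) :
    Sbtw ℝ b q p ∧ Sbtw ℝ q p a := by
  simp only [Set.mem_insert_iff, Set.mem_singleton_iff] at hi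
  rcases hi with rfl | rfl | rfl <;>
  · refine master H hgp _ L hL ((hhj _ _).2 ?_) ((hhj _ _).2 ?_)
      (fun hne => absurd ((hhj _ _).1 hne) ?_) (fun hne => absurd ((hhj _ _).1 hne) ?_)
      (fun hne => absurd ((hhj _ _).1 hne) ?_) (fun hne => absurd ((hhj _ _).1 hne) ?_)
      a q p b ha hq hp hb <;>
    · simp only [Set.mem_insert_iff, Set.mem_singleton_iff, Prod.mk.injEq]
      decide
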